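/- Let x, y be two distinct sequences of length n over Σ_q such that |I_1(x) ∩ I_1(y)| = 1, and write x = u x̃ v, y = u ỹ v with u, v the longest common prefix and suffix. Then either {x̃, ỹ} = {ac, cd} for pairwise distinct symbols a, c, d, or {x̃, ỹ} = {ac w b, c w b d} for symbols a, b, c, d and a (possibly empty) sequence w with a ≠ c, b ≠ d, and ac w ≠ w b d. -/

import Mathlib

/-- The t-insertion ball: length-(|x|+t) supersequences of x. -/
def iBall {α : Type*} (t : ℕ) (x : List α) : Set (List α) :=
  {z | x.Sublist z ∧ z.length = x.length + t}

private lemma sublist_succ {α : Type*} {x z : List α} (h : x.Sublist z)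
    (hl : z.length = x.length + 1) :
    ∃ l a r, x = l ++ r ∧ z = l ++ a :: r := by
  induction h with
  | slnil => simp at hl
  | @cons l₁ l₂ a h ih =>
      have he : l₁ = l₂ := h.eq_of_length (by simp at hl; omega)
      exact ⟨[], a, l₂, by simp [he], by simp⟩
  | @cons_cons l₁ l₂ a h ih =>
      obtain ⟨l, c, r, h1, h2⟩ := ih (by simp at hl; omega)
      exact ⟨a :: l, c, r, by simp [h1], by simp [h2]⟩

private lemma cancel_cons {α : Type*} : ∀ (w : List α) {X Y : List α} {a : α},
    w ++ X = a :: (w ++ Y) → X = a :: Y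
  | [], X, Y, a, h => by simpa using h
  | g :: w', X, Y, a, h => by
      simp only [List.cons_append] at h
      injection h with h1 h2
      subst h1
      exact cancel_cons w' h2

private lemma cancel_concat {α : Type*} (w : List α) {X Y : List α} {b : α}
    (h : X ++ w ++ [b] = Y ++ w) : Y = X ++ [b] := by
  have h1 := congrArg List.reverse h
  simp only [List.reverse_append, List.reverse_cons, List.reverse_nil, List.nil_append,
    List.singleton_append, List.append_assoc] at h1
  have h2 := cancel_cons w.reverse h1.symm
  have h3 := congrArg List.reverse h2
  simpa using h3

private lemma main_aux {q : ℕ} {u v xt yt l1 r1 l2 r2 : List (Fin q)} {a b : Fin q}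
    (hxt : xt ≠ []) (hyt : yt ≠ [])
    (hh : xt.head hxt ≠ yt.head hyt)
    (hl : xt.getLast hxt ≠ yt.getLast hyt)
    (hx : u ++ xt ++ v = l1 ++ r1)
    (hy : u ++ yt ++ v = l2 ++ r2)
    (hz : l1 ++ a :: r1 = l2 ++ b :: r2)
    (hij : l1.length < l2.length) :
    xt = yt.tail ++ [xt.getLast hxt] := by
  obtain ⟨xh, xt', rfl⟩ := List.exists_cons_of_ne_nil hxt
  obtain ⟨yh, yt', rfl⟩ := List.exists_cons_of_ne_nil hyt
  -- l1 is a prefix of l2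
  have p2 : l2 <+: l1 ++ a :: r1 := ⟨b :: r2, hz.symm⟩
  obtain ⟨e, he⟩ := List.prefix_of_prefix_length_le ⟨a :: r1, rfl⟩ p2 hij.le
  rw [← he, List.append_assoc] at hz hy
  have hz' : a :: r1 = e ++ b :: r2 := List.append_cancel_left hz
  have hel : e ≠ [] := by
    intro h; rw [← he, h] at hij; simp at hij
  cases e with
  | nil => exact absurd rfl hel
  | cons g e' =>
  injection hz' with h1 hr1
  subst h1
  subst hr1
  simp only [List.append_assoc] at hx hy
  -- Step 1 : l1 is a prefix of u
  have hpx : l1 <+: u ++ ((xh :: xt') ++ v) := ⟨e' ++ b :: r2, hx.symm⟩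
  have hile : l1.length ≤ u.length := by
    by_contra hlt
    push_neg at hlt
    obtain ⟨g, hg⟩ := List.prefix_of_prefix_length_le ⟨(xh :: xt') ++ v, rfl⟩ hpx hlt.le
    -- hg : u ++ g = l1
    have hgn : g ≠ [] := by
      intro h; subst h
      have := congrArg List.length hg
      simp at this; omega
    obtain ⟨gh, g', rfl⟩ := List.exists_cons_of_ne_nil hgn
    rw [← hg, List.append_assoc] at hx hy
    have ex := List.append_cancel_left hx
    have ey := List.append_cancel_left hy
    simp only [List.cons_append] at ex ey
    injection ex with ex1 _
    injection ey with ey1 _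
    exact hh (by simpa using ex1.trans ey1.symm)
  obtain ⟨u', hu⟩ : l1 <+: u :=
    List.prefix_of_prefix_length_le hpx ⟨(xh :: xt') ++ v, rfl⟩ hile
  -- Step 2 : r2 is a suffix of v
  have hsx : r2 <:+ u ++ ((xh :: xt') ++ v) := by
    refine ⟨l1 ++ (e' ++ [b]), ?_⟩
    rw [hx]; simp
  have hjle : r2.length ≤ v.length := by
    by_contra hlt
    push_neg at hlt
    obtain ⟨g, hg⟩ := List.suffix_of_suffix_length_le ⟨u ++ (xh :: xt'), by simp⟩ hsx hlt.le
    -- hg : g ++ v = r2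
    have hgn : g ≠ [] := by
      intro h; subst h
      have := congrArg List.length hg
      simp at this; omega
    rw [← hg] at hx hy
    have ex : u ++ (xh :: xt') = (l1 ++ (e' ++ [b])) ++ g := by
      apply List.append_cancel_right (bs := v)
      simpa [List.append_assoc] using hx
    have ey : u ++ (yh :: yt') = (l1 ++ (a :: e')) ++ g := by
      apply List.append_cancel_right (bs := v)
      simpa [List.append_assoc] using hy
    have lx := congrArg List.getLast? ex
    have ly := congrArg List.getLast? ey
    rw [List.getLast?_append_of_ne_nil _ (by simp : (xh :: xt' : List (Fin q)) ≠ []),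
      List.getLast?_append_of_ne_nil _ hgn] at lx
    rw [List.getLast?_append_of_ne_nil _ (by simp : (yh :: yt' : List (Fin q)) ≠ []),
      List.getLast?_append_of_ne_nil _ hgn] at ly
    apply hl
    have heq := lx.trans ly.symm
    rw [List.getLast?_eq_getLast hxt, List.getLast?_eq_getLast hyt] at heq
    exact Option.some.inj heq
  obtain ⟨v', hv⟩ : r2 <:+ v :=
    List.suffix_of_suffix_length_le hsx ⟨u ++ (xh :: xt'), by simp⟩ hjle
  -- substitute and cancel
  rw [← hu, ← hv] at hx hy
  have E1 : u' ++ ((xh :: xt') ++ v') = e' ++ [b] := by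
    apply List.append_cancel_left (as := l1)
    apply List.append_cancel_right (bs := r2)
    simpa [List.append_assoc] using hx
  have E2 : u' ++ ((yh :: yt') ++ v') = [a] ++ e' := by
    apply List.append_cancel_left (as := l1)
    apply List.append_cancel_right (bs := r2)
    simpa [List.append_assoc] using hy
  have star : u' ++ ((yh :: yt') ++ (v' ++ [b])) = a :: (u' ++ ((xh :: xt') ++ v')) := by
    have h := congrArg (· ++ [b]) E2
    simp only [List.append_assoc] at h
    rw [← E1] at h
    simpa [List.append_assoc] using h
  have h9 := cancel_cons u' star
  simp only [List.cons_append] at h9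
  injection h9 with h9a h9b
  have h10 : xh :: xt' = yt' ++ [b] := by
    apply cancel_concat v'
    simpa [List.append_assoc] using h9b
  have hlb : (xh :: xt').getLast hxt = b := by
    have := congrArg List.getLast? h10
    rw [List.getLast?_concat, List.getLast?_eq_getLast hxt] at this
    exact Option.some.inj this
  rw [hlb]
  simpa using h10

private lemma head_eq_of_eq {α : Type*} {l m : List α} {c : α} (h : l = c :: m)
    (hne : l ≠ []) : l.head hne = c := by subst h; rfl

private lemma getLast_concat_eq {α : Type*} (w : List α) (bb : α) {l : List α}
    (h : l = w ++ [bb]) (hne : l ≠ []) : l.getLast hne = bb := by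
  subst h; exact List.getLast_concat

private lemma not_one_of_two {α : Type*} {S : Set α} {z1 z2 : α} (h1 : z1 ∈ S)
    (h2 : z2 ∈ S) (hne : z1 ≠ z2) (hc : S.ncard = 1) : False := by
  obtain ⟨z0, hz0⟩ := Set.ncard_eq_one.mp hc
  rw [hz0] at h1 h2
  exact hne (h1.trans h2.symm)

private lemma mid_eq {α : Type*} {u v A B : List α} (h : u ++ A ++ v = u ++ B ++ v) :
    A = B := by
  have h1 : u ++ A = u ++ B := List.append_cancel_right h
  exact List.append_cancel_left h1

private lemma step2 {q : ℕ} {x y u v xt yt : List (Fin q)}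
    (hx : x = u ++ xt ++ v) (hy : y = u ++ yt ++ v)
    (hlen : yt.length = xt.length)
    (hxt : xt ≠ []) (hyt : yt ≠ [])
    (hhead : xt.head hxt ≠ yt.head hyt)
    (hlast : xt.getLast hxt ≠ yt.getLast hyt)
    (hcard : (iBall 1 x ∩ iBall 1 y).ncard = 1)
    (hd : xt = yt.tail ++ [xt.getLast hxt]) :
    (∃ a c d : Fin q, a ≠ c ∧ c ≠ d ∧ a ≠ d ∧
      ({xt, yt} : Set (List (Fin q))) = {[a, c], [c, d]}) ∨
    (∃ a b c d : Fin q, ∃ w : List (Fin q), a ≠ c ∧ b ≠ d ∧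
      a :: c :: w ≠ w ++ [b, d] ∧
      ({xt, yt} : Set (List (Fin q))) =
        {a :: c :: (w ++ [b]), c :: (w ++ [b, d])}) := by
  obtain ⟨dd, hdd⟩ : ∃ dd, xt.getLast hxt = dd := ⟨_, rfl⟩
  rw [hdd] at hd hlast
  obtain ⟨ya, s, rfl⟩ := List.exists_cons_of_ne_nil hyt
  simp only [List.tail_cons] at hd
  -- z1 = u ++ (yt ++ [dd]) ++ v is in the intersection
  have mem1 : u ++ ((ya :: s) ++ [dd]) ++ v ∈ iBall 1 x ∩ iBall 1 y := by
    refine ⟨⟨?_, ?_⟩, ?_, ?_⟩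
    · rw [hx, hd]
      exact ((List.Sublist.refl u).append
        ((List.sublist_cons_self ya s).append (List.Sublist.refl [dd]))).append
          (List.Sublist.refl v)
    · simp only [hx, hd, List.length_append, List.length_cons, List.length_nil]; omega
    · rw [hy]
      exact ((List.Sublist.refl u).append
        ((List.prefix_append (ya :: s) [dd]).sublist)).append (List.Sublist.refl v)
    · simp only [hy, List.length_append, List.length_cons, List.length_nil]; omega
  subst hd
  rcases s with _ | ⟨c, s'⟩
  · -- |xt| = 1 : always a contradiction
    exfalso
    have hne : dd ≠ ya := by
      have h1 : (([] : List (Fin q)) ++ [dd]).head hxt = dd :=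
        head_eq_of_eq (m := ([] : List (Fin q))) (by simp) hxt
      rwa [h1, List.head_cons] at hhead
    have mem2 : u ++ (([] ++ [dd]) ++ [ya]) ++ v ∈ iBall 1 x ∩ iBall 1 y := by
      refine ⟨⟨?_, ?_⟩, ?_, ?_⟩
      · rw [hx]
        exact ((List.Sublist.refl u).append
          ((List.prefix_append ([] ++ [dd]) [ya]).sublist)).append (List.Sublist.refl v)
      · simp only [hx, List.length_append, List.length_cons, List.length_nil,
          List.nil_append]; omega
      · rw [hy]
        exact ((List.Sublist.refl u).append
          (List.sublist_cons_self dd [ya])).append (List.Sublist.refl v)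
      · simp only [hy, List.length_append, List.length_cons, List.length_nil,
          List.nil_append]; omega
    refine not_one_of_two mem1 mem2 ?_ hcard
    intro h
    have := mid_eq h
    simp only [List.nil_append, List.cons_append, List.cons.injEq, List.nil_append] at this
    exact hne this.2.1
  · -- s = c :: s'
    have hhead' : c ≠ ya := by
      have h1 : ((c :: s') ++ [dd]).head hxt = c :=
        head_eq_of_eq (m := s' ++ [dd]) (by simp) hxt
      rwa [h1, List.head_cons] at hhead
    rcases List.eq_nil_or_concat s' with rfl | ⟨w, bb, hwb⟩
    · -- |xt| = 2
      have hlast' : dd ≠ c := by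
        have h1 : (ya :: [c]).getLast hyt = c := getLast_concat_eq [ya] c (by simp) hyt
        rwa [h1] at hlast
      by_cases had : ya = dd
      · -- contradiction
        exfalso
        subst had
        have mem2 : u ++ (c :: ya :: [c]) ++ v ∈ iBall 1 x ∩ iBall 1 y := by
          refine ⟨⟨?_, ?_⟩, ?_, ?_⟩
          · rw [hx]
            exact ((List.Sublist.refl u).append
              ((List.prefix_append ((c :: []) ++ [ya]) [c]).sublist)).append
                (List.Sublist.refl v)
          · simp only [hx, List.length_append, List.length_cons, List.length_nil]; omega
          · rw [hy]
            exact ((List.Sublist.refl u).append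
              (List.sublist_cons_self c (ya :: [c]))).append (List.Sublist.refl v)
          · simp only [hy, List.length_append, List.length_cons, List.length_nil]; omega
        refine not_one_of_two mem1 mem2 ?_ hcard
        intro h
        have := mid_eq h
        simp only [List.cons_append, List.nil_append, List.cons.injEq] at this
        exact hhead' this.2.1
      · left
        refine ⟨ya, c, dd, fun h => hhead' h.symm, fun h => hlast' h.symm, had, ?_⟩
        have h1 : ((c :: []) ++ [dd] : List (Fin q)) = [c, dd] := by simp
        rw [h1, Set.pair_comm]
    · -- |xt| ≥ 3 : xt = (c :: (w ++ [bb])) ++ [dd], yt = ya :: c :: (w ++ [bb])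
      rw [List.concat_eq_append] at hwb
      subst hwb
      have hlast' : dd ≠ bb := by
        have h1 : (ya :: c :: (w ++ [bb])).getLast hyt = bb :=
          getLast_concat_eq (ya :: c :: w) bb (by simp) hyt
        rwa [h1] at hlast
      by_cases heq : ya :: c :: w = w ++ [bb, dd]
      · -- contradiction
        exfalso
        have hyt2 : ya :: c :: (w ++ [bb]) = w ++ [bb, dd, bb] := by
          have := congrArg (· ++ [bb]) heq
          simpa [List.append_assoc] using this
        have hx2 : ((c :: (w ++ [bb])) ++ [dd]) ++ [bb] = c :: (w ++ [bb, dd, bb]) := by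
          simp
        have mem2 : u ++ (((c :: (w ++ [bb])) ++ [dd]) ++ [bb]) ++ v ∈
            iBall 1 x ∩ iBall 1 y := by
          refine ⟨⟨?_, ?_⟩, ?_, ?_⟩
          · rw [hx]
            exact ((List.Sublist.refl u).append
              ((List.prefix_append ((c :: (w ++ [bb])) ++ [dd]) [bb]).sublist)).append
                (List.Sublist.refl v)
          · simp only [hx, List.length_append, List.length_cons, List.length_nil]; omega
          · rw [hy]
            refine ((List.Sublist.refl u).append ?_).append (List.Sublist.refl v)
            rw [hyt2, hx2]
            exact List.sublist_cons_self _ _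
          · simp only [hy, hyt2, hx2, List.length_append, List.length_cons,
              List.length_nil]; omega
        refine not_one_of_two mem1 mem2 ?_ hcard
        intro h
        have h2 := mid_eq h
        have h3 := congrArg List.getLast? h2
        rw [List.getLast?_concat] at h3
        rw [show (((c :: (w ++ [bb])) ++ [dd]) ++ [bb] : List (Fin q)) =
          (c :: (w ++ [bb, dd])) ++ [bb] by simp, List.getLast?_concat] at h3
        exact hlast' (Option.some.inj h3)
      · right
        refine ⟨ya, bb, c, dd, w, fun h => hhead' h.symm, fun h => hlast' h.symm, heq, ?_⟩
        have h1 : ((c :: (w ++ [bb])) ++ [dd] : List (Fin q)) = c :: (w ++ [bb, dd]) := by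
          simp
        rw [h1, Set.pair_comm]

theorem stmt_15 (q n : ℕ) (x y u v xt yt : List (Fin q))
    (hx : x = u ++ xt ++ v) (hy : y = u ++ yt ++ v)
    (hxn : x.length = n) (hyn : y.length = n) (hxy : x ≠ y)
    (hxt : xt ≠ []) (hyt : yt ≠ [])
    (hhead : ∀ (h1 : xt ≠ []) (h2 : yt ≠ []), xt.head h1 ≠ yt.head h2)
    (hlast : ∀ (h1 : xt ≠ []) (h2 : yt ≠ []), xt.getLast h1 ≠ yt.getLast h2)
    (hcard : (iBall 1 x ∩ iBall 1 y).ncard = 1) :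
    (∃ a c d : Fin q, a ≠ c ∧ c ≠ d ∧ a ≠ d ∧
      ({xt, yt} : Set (List (Fin q))) = {[a, c], [c, d]}) ∨
    (∃ a b c d : Fin q, ∃ w : List (Fin q), a ≠ c ∧ b ≠ d ∧
      a :: c :: w ≠ w ++ [b, d] ∧
      ({xt, yt} : Set (List (Fin q))) =
        {a :: c :: (w ++ [b]), c :: (w ++ [b, d])}) := by
  have hlen : yt.length = xt.length := by
    have h1 := congrArg List.length hx
    have h2 := congrArg List.length hy
    simp only [List.length_append] at h1 h2
    omega
  obtain ⟨z0, hz0⟩ := Set.ncard_eq_one.mp hcard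
  have hz0m : z0 ∈ iBall 1 x ∩ iBall 1 y := by rw [hz0]; exact rfl
  obtain ⟨⟨hsx, hlx⟩, hsy, hly⟩ := hz0m
  obtain ⟨l1, a, r1, hx1, hz1⟩ := sublist_succ hsx hlx
  obtain ⟨l2, b, r2, hy1, hz2⟩ := sublist_succ hsy hly
  have hz12 : l1 ++ a :: r1 = l2 ++ b :: r2 := hz1.symm.trans hz2
  rcases lt_trichotomy l1.length l2.length with hlt | heqq | hgt
  · have hd := main_aux hxt hyt (hhead hxt hyt) (hlast hxt hyt)
      (hx.symm.trans hx1) (hy.symm.trans hy1) hz12 hlt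
    exact step2 hx hy hlen hxt hyt (hhead hxt hyt) (hlast hxt hyt) hcard hd
  · exfalso
    obtain ⟨h1, h2⟩ := List.append_inj hz12 heqq
    injection h2 with _ h3
    exact hxy (by rw [hx1, hy1, h1, h3])
  · have hd := main_aux hyt hxt (Ne.symm (hhead hxt hyt)) (Ne.symm (hlast hxt hyt))
      (hy.symm.trans hy1) (hx.symm.trans hx1) hz12.symm hgt
    have hres := step2 hy hx hlen.symm hyt hxt (Ne.symm (hhead hxt hyt))
      (Ne.symm (hlast hxt hyt)) (by rwa [Set.inter_comm]) hd
    rw [Set.pair_comm xt yt]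
    exact hres
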